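/- Let s be a natural number, and let v : {1,…,s+1} → ℝ and α : {1,…,s+1} × {1,…,s+1} → ℝ satisfy v_i ≥ 0 and α_{ij} ≥ 0 for all i and all j < i, together with the consistency condition v_i + Σ_{j<i} α_{ij} = 1 for every i. Let x₀ ∈ ℝ and let x : {1,…,s+1} → ℝ satisfy x_i ≤ v_i·x₀ + Σ_{j<i} α_{ij}·x_j for every i. Then x_i ≤ x₀ for every i ∈ {1,…,s+1}. -/
import Mathlib


theorem stmt_12 (s : ℕ) (v : Fin (s + 1) → ℝ) (α : Fin (s + 1) → Fin (s + 1) → ℝ)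
    (hv : ∀ i, 0 ≤ v i) (hα : ∀ i j, j < i → 0 ≤ α i j)
    (hcons : ∀ i, v i + ∑ j ∈ Finset.Iio i, α i j = 1)
    (x₀ : ℝ) (x : Fin (s + 1) → ℝ)
    (hx : ∀ i, x i ≤ v i * x₀ + ∑ j ∈ Finset.Iio i, α i j * x j) :
    ∀ i, x i ≤ x₀ := by
  have H : ∀ n : ℕ, ∀ i : Fin (s + 1), (i : ℕ) = n → x i ≤ x₀ := by
    intro n
    induction n using Nat.strong_induction_on with
    | _ n ih =>
      intro i hi
      calc x i ≤ v i * x₀ + ∑ j ∈ Finset.Iio i, α i j * x j := hx i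
      _ ≤ v i * x₀ + ∑ j ∈ Finset.Iio i, α i j * x₀ := by
          gcongr with j hj
          · exact hα i j (Finset.mem_Iio.mp hj)
          · exact ih j (hi ▸ (Fin.lt_iff_val_lt_val.mp (Finset.mem_Iio.mp hj))) j rfl
      _ = (v i + ∑ j ∈ Finset.Iio i, α i j) * x₀ := by
          rw [add_mul, Finset.sum_mul]
      _ = x₀ := by rw [hcons i, one_mul]
  exact fun i => H i i rfl
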